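/- For all j ∈ ℤ one has f_{λ/μ}(j) = w_λ(t_k(w_μ^{-1}(j))), i.e. f_{λ/μ} = w_λ ∘ t_k ∘ w_μ^{-1} as bijections of ℤ. -/

import Mathlib

/-- The height `λ̄_a` of the `a`-th column (counted from the right) of the
partition `f = (f 1 ≥ ⋯ ≥ f k)` inside the `k × (n-k)` rectangle. -/
def colHeight (n k : ℕ) (f : ℕ → ℕ) (a : ℕ) : ℕ :=
  ((Finset.Icc 1 k).filter (fun i => n - k - a + 1 ≤ f i)).card

/-- `b_i = n - k - μ_i + i`. -/
def bvec (n k : ℕ) (m : ℕ → ℕ) (i : ℕ) : ℕ := n - k - m i + i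

/-- The short label `J(a,i) = {min (a+j-1) (b_j) : j = 1, …, i}`. -/
def shortLabel (n k : ℕ) (m : ℕ → ℕ) (a i : ℕ) : Finset ℕ :=
  (Finset.Icc 1 i).image (fun j => min (a + j - 1) (bvec n k m j))

/-- The label `I'(a,i) = J(a,i) ∪ {b_{i+1}, …, b_k}`. -/
def fullLabel (n k : ℕ) (m : ℕ → ℕ) (a i : ℕ) : Finset ℕ :=
  shortLabel n k m a i ∪ (Finset.Icc (i + 1) k).image (bvec n k m)

/-- `I_μ = {b_1, …, b_k}`. -/
def Imu (n k : ℕ) (m : ℕ → ℕ) : Finset ℕ := (Finset.Icc 1 k).image (bvec n k m)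

/-- The box `(a,i)` belongs to the skew diagram `λ/μ`. -/
def InSkew (n k : ℕ) (l m : ℕ → ℕ) (a i : ℕ) : Prop :=
  1 ≤ a ∧ a ≤ n - k ∧ 1 ≤ i ∧ i ≤ k ∧ colHeight n k m a < i ∧ i ≤ colHeight n k l a

/-- The box `(a,i)` belongs to the boundary ribbon `R(λ/μ)`. -/
def InRibbon (n k : ℕ) (l m : ℕ → ℕ) (a i : ℕ) : Prop :=
  InSkew n k l m a i ∧ (a = 1 ∨ colHeight n k l (a - 1) ≤ i)

/-- The defining specification of the map `f_{λ/μ} : ℤ → ℤ`: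
`f(a + μ̄_a) = a + λ̄_a`, `f(b_i) = (n - k - λ_i + i) + n`, and `n`-periodicity. -/
def IsSkewBAF (n k : ℕ) (l m : ℕ → ℕ) (f : ℤ → ℤ) : Prop :=
  (∀ a : ℕ, 1 ≤ a → a ≤ n - k →
    f ((a + colHeight n k m a : ℕ) : ℤ) = ((a + colHeight n k l a : ℕ) : ℤ)) ∧
  (∀ i : ℕ, 1 ≤ i → i ≤ k →
    f ((bvec n k m i : ℕ) : ℤ) = ((n - k - l i + i : ℕ) : ℤ) + (n : ℤ)) ∧
  (∀ j : ℤ, f (j + (n : ℤ)) = f j + (n : ℤ))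

/-- `W : ℤ → ℤ` is the extension to `ℤ` of the `k`-Grassmannian permutation `w_λ`
attached to the partition `l`, i.e. `W i = n - k - λ_i + i` for `1 ≤ i ≤ k`,
`W (k + a) = a + λ̄_a` for `1 ≤ a ≤ n - k`, and `W (j + n) = W j + n`. -/
def ExtGrassPerm (n k : ℕ) (l : ℕ → ℕ) (W : ℤ → ℤ) : Prop :=
  (∀ i : ℕ, 1 ≤ i → i ≤ k → W (i : ℤ) = ((n - k - l i + i : ℕ) : ℤ)) ∧
  (∀ a : ℕ, 1 ≤ a → a ≤ n - k →
    W ((k + a : ℕ) : ℤ) = ((a + colHeight n k l a : ℕ) : ℤ)) ∧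
  (∀ j : ℤ, W (j + (n : ℤ)) = W j + (n : ℤ))

/-- The map `t_k : ℤ → ℤ` with `t_k i = i + n` for `1 ≤ i ≤ k`, `t_k i = i` for
`k + 1 ≤ i ≤ n`, extended by `t_k (j + n) = t_k j + n`. -/
def tkfun (n k : ℕ) (j : ℤ) : ℤ := if (j - 1) % (n : ℤ) < (k : ℤ) then j + n else j

theorem stmt9 (n k : ℕ) (l m : ℕ → ℕ)
    (hk : 0 < k) (hkn : k < n)
    (hlmono : ∀ i j, 1 ≤ i → i ≤ j → j ≤ k → l j ≤ l i)
    (hl1 : l 1 ≤ n - k)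
    (hmmono : ∀ i j, 1 ≤ i → i ≤ j → j ≤ k → m j ≤ m i)
    (hml : ∀ i, 1 ≤ i → i ≤ k → m i ≤ l i)
    (f : ℤ → ℤ) (hf : IsSkewBAF n k l m f)
    (Wl Wm Wminv : ℤ → ℤ)
    (hWl : ExtGrassPerm n k l Wl) (hWm : ExtGrassPerm n k m Wm)
    (hinv1 : Function.LeftInverse Wminv Wm)
    (hinv2 : Function.RightInverse Wminv Wm) :
    ∀ j : ℤ, f j = Wl (tkfun n k (Wminv j)) := by
  obtain ⟨hf1, hf2, hf3⟩ := hf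
  obtain ⟨hWl1, hWl2, hWl3⟩ := hWl
  obtain ⟨hWm1, hWm2, hWm3⟩ := hWm
  have hn : (0:ℤ) < n := by omega
  have hmul : ∀ (g : ℤ → ℤ), (∀ j, g (j + n) = g j + n) →
      ∀ (q j : ℤ), g (j + q * n) = g j + q * n := by
    intro g hg q j
    induction q using Int.induction_on with
    | zero => simp
    | succ q ih =>
      have h1 : j + ((q : ℤ) + 1) * n = (j + q * n) + n := by ring
      rw [h1, hg, ih]; ring
    | pred q ih =>
      have h1 : j + (-(q:ℤ) - 1) * n + n = j + (-(q:ℤ)) * n := by ring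
      have h2 := hg (j + (-(q:ℤ) - 1) * n)
      rw [h1, ih] at h2
      linarith
  have hWminv : ∀ j : ℤ, Wminv (j + n) = Wminv j + n := by
    intro j
    have h := hWm3 (Wminv j)
    rw [hinv2 j] at h
    calc Wminv (j + n) = Wminv (Wm (Wminv j + n)) := by rw [h]
    _ = Wminv j + n := hinv1 _
  have htk : ∀ j : ℤ, tkfun n k (j + n) = tkfun n k j + n := by
    intro j
    unfold tkfun
    have h1 : (j + (n:ℤ) - 1) % n = (j - 1) % n := by
      have h2 : j + (n:ℤ) - 1 = (j - 1) + 1 * n := by ring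
      rw [h2, Int.add_mul_emod_self_right]
    rw [h1]
    split <;> ring
  have key : ∀ x : ℕ, 1 ≤ x → x ≤ n → f (Wm (x:ℤ)) = Wl (tkfun n k (x:ℤ)) := by
    intro x hx1 hxn
    by_cases hxk : x ≤ k
    · have htkx : tkfun n k (x:ℤ) = (x:ℤ) + n := by
        have h0 : ((x:ℤ) - 1) % n = (x:ℤ) - 1 := Int.emod_eq_of_lt (by omega) (by omega)
        unfold tkfun
        rw [h0, if_pos (by omega)]
      rw [htkx, hWl3, hWl1 x hx1 hxk, hWm1 x hx1 hxk]
      exact hf2 x hx1 hxk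
    · push_neg at hxk
      set a := x - k with ha
      have hxeq : x = k + a := by omega
      have ha1 : 1 ≤ a := by omega
      have ha2 : a ≤ n - k := by omega
      have htkx : tkfun n k (x:ℤ) = (x:ℤ) := by
        have h0 : ((x:ℤ) - 1) % n = (x:ℤ) - 1 := Int.emod_eq_of_lt (by omega) (by omega)
        unfold tkfun
        rw [h0, if_neg (by omega)]
      rw [htkx, hxeq]
      rw [show ((k + a : ℕ) : ℤ) = ((k + a : ℕ) : ℤ) from rfl]
      rw [hWl2 a ha1 ha2, hWm2 a ha1 ha2]
      exact hf1 a ha1 ha2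
  intro j
  set x0 := Wminv j with hx0def
  set q := (x0 - 1) / n with hq
  set xz := (x0 - 1) % n + 1 with hxz
  have hmod0 : 0 ≤ (x0 - 1) % n := Int.emod_nonneg _ (by omega)
  have hmod1 : (x0 - 1) % n < n := Int.emod_lt_of_pos _ hn
  have hde := Int.mul_ediv_add_emod (x0 - 1) (n : ℤ)
  have hx0 : x0 = xz + q * n := by rw [hxz, hq]; linarith
  obtain ⟨x, hxcast⟩ : ∃ x : ℕ, (x : ℤ) = xz := ⟨xz.toNat, Int.toNat_of_nonneg (by omega)⟩
  have hx1 : 1 ≤ x := by omega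
  have hxn : x ≤ n := by omega
  have hj : j = Wm (xz) + q * n := by
    have := hmul Wm hWm3 q xz
    rw [← hx0] at this
    rw [← this, hx0def, hinv2]
  rw [hj, hmul f hf3 q (Wm xz), hx0, hmul (tkfun n k) htk q xz,
    hmul Wl hWl3 q (tkfun n k xz), ← hxcast, key x hx1 hxn]
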